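/- Suppose κ is conditionally independent of (x(1),…,x(K), β̃, Y₀) given W, i.e. for every k, every w ∈ S, and every bounded measurable function f of (x(1),…,x(K), β̃, Y₀), E[f·1{κ = k, W = w}] = p_k(w)·E[f·1{W = w}]. Define the observed treatment X = x(κ) and outcome Y = Y₀ + β̃·X, and define the individual weight λ(ω) = Σ_{1≤j<k≤K} p_j(W(ω))·p_k(W(ω))·(ℓ(k, W(ω)) − ℓ(j, W(ω)))·(x(k)(ω) − x(j)(ω)). Then E[ℓ̈·Y] = E[λ·β̃] and E[ℓ̈·X] = E[λ]; hence, if E[λ] ≠ 0, the leniency IV estimand satisfies β* = E[ℓ̈·Y]/E[ℓ̈·X] = E[λ·β̃]/E[λ]. -/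

import Mathlib

open MeasureTheory ProbabilityTheory BigOperators

section Stmt15Helpers
open Filter Topology

noncomputable def clampR (n : ℕ) (t : ℝ) : ℝ := max (-(n : ℝ)) (min (n : ℝ) t)

lemma clampR_continuous (n : ℕ) : Continuous (clampR n) :=
  continuous_const.max (continuous_const.min continuous_id)

lemma clampR_abs_le_self (n : ℕ) (t : ℝ) : |clampR n t| ≤ |t| := by
  unfold clampR
  rw [abs_le]
  constructor
  · rcases le_total 0 t with h | h
    · refine le_trans ?_ (le_max_right _ _)
      refine le_min (le_trans ?_ (Nat.cast_nonneg n)) ?_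
      · simp [neg_nonpos, abs_nonneg]
      · rw [abs_of_nonneg h]; linarith
    · rw [abs_of_nonpos h, neg_neg]
      rcases le_total t (-(n : ℝ)) with h2 | h2
      · exact le_trans h2 (le_max_left _ _)
      · refine le_trans ?_ (le_max_right _ _)
        exact le_min (le_trans h (Nat.cast_nonneg n)) le_rfl
  · refine max_le (le_trans (neg_nonpos.mpr (Nat.cast_nonneg n)) (abs_nonneg t)) ?_
    exact le_trans (min_le_right _ _) (le_abs_self t)

lemma clampR_abs_le (n : ℕ) (t : ℝ) : |clampR n t| ≤ (n : ℝ) := by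
  unfold clampR
  rw [abs_le]
  refine ⟨le_max_left _ _, ?_⟩
  exact max_le (le_trans (neg_nonpos.mpr (Nat.cast_nonneg n)) (Nat.cast_nonneg n)) (min_le_left _ _)

lemma clampR_eq_self {n : ℕ} {t : ℝ} (h : |t| ≤ (n : ℝ)) : clampR n t = t := by
  rw [abs_le] at h
  unfold clampR
  rw [min_eq_right h.2, max_eq_right h.1]

lemma clampR_tendsto (t : ℝ) : Tendsto (fun n : ℕ => clampR n t) atTop (𝓝 t) := by
  apply tendsto_atTop_of_eventually_const (i₀ := ⌈|t|⌉₊)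
  intro n hn
  exact clampR_eq_self (le_trans (Nat.le_ceil _) (by exact_mod_cast hn))

lemma clamp01_eq {t : ℝ} (h : t = 0 ∨ t = 1) : max 0 (min 1 t) = t := by
  rcases h with h | h <;> simp [h]

lemma clamp01_abs_le (t : ℝ) : |max 0 (min 1 t)| ≤ 1 := by
  rw [abs_of_nonneg (le_max_left _ _)]
  exact max_le zero_le_one (min_le_left _ _)

lemma sumIdent {n : ℕ} (a l xx : Fin n → ℝ) (ha : ∑ k, a k = 1) :
    (∑ j, ∑ k, if j < k then a j * a k * (l k - l j) * (xx k - xx j) else 0)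
      = ∑ k, a k * (l k - ∑ j, a j * l j) * xx k := by
  have hsplit : ∀ j k : Fin n, a j * a k * (l k - l j) * (xx k - xx j)
      = (if j < k then a j * a k * (l k - l j) * (xx k - xx j) else 0)
        + (if k < j then a j * a k * (l k - l j) * (xx k - xx j) else 0) := by
    intro j k
    rcases lt_trichotomy j k with h | h | h
    · simp [h, asymm h]
    · subst h; simp
    · simp [h, asymm h, not_lt_of_gt h]
  have h2 : (∑ j, ∑ k, if k < j then a j * a k * (l k - l j) * (xx k - xx j) else 0)
      = ∑ j, ∑ k, if j < k then a j * a k * (l k - l j) * (xx k - xx j) else 0 := by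
    rw [Finset.sum_comm]
    refine Finset.sum_congr rfl fun j _ => Finset.sum_congr rfl fun k _ => ?_
    by_cases h : j < k
    · simp only [h, if_true]; ring
    · simp [h]
  have key : (∑ j, ∑ k, a j * a k * (l k - l j) * (xx k - xx j))
      = 2 * ∑ j, ∑ k, if j < k then a j * a k * (l k - l j) * (xx k - xx j) else 0 := by
    calc (∑ j, ∑ k, a j * a k * (l k - l j) * (xx k - xx j))
        = ∑ j, ∑ k, ((if j < k then a j * a k * (l k - l j) * (xx k - xx j) else 0)
            + (if k < j then a j * a k * (l k - l j) * (xx k - xx j) else 0)) := by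
          exact Finset.sum_congr rfl fun j _ => Finset.sum_congr rfl fun k _ => hsplit j k
      _ = (∑ j, ∑ k, if j < k then a j * a k * (l k - l j) * (xx k - xx j) else 0)
            + ∑ j, ∑ k, if k < j then a j * a k * (l k - l j) * (xx k - xx j) else 0 := by
          simp [Finset.sum_add_distrib]
      _ = 2 * ∑ j, ∑ k, if j < k then a j * a k * (l k - l j) * (xx k - xx j) else 0 := by
          rw [h2]; ring
  have hexp : (∑ j, ∑ k, a j * a k * (l k - l j) * (xx k - xx j))
      = 2 * ((∑ k, a k * (l k * xx k)) - (∑ k, a k * l k) * (∑ k, a k * xx k)) := by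
    have hterm : ∀ j k : Fin n, a j * a k * (l k - l j) * (xx k - xx j)
        = a j * (a k * (l k * xx k)) - (a j * xx j) * (a k * l k)
          - (a j * l j) * (a k * xx k) + (a j * (l j * xx j)) * a k := by
      intro j k; ring
    calc (∑ j, ∑ k, a j * a k * (l k - l j) * (xx k - xx j))
        = ∑ j, (a j * (∑ k, a k * (l k * xx k)) - (a j * xx j) * (∑ k, a k * l k)
            - (a j * l j) * (∑ k, a k * xx k) + (a j * (l j * xx j)) * (∑ k, a k)) := by
          refine Finset.sum_congr rfl fun j _ => ?_
          rw [Finset.mul_sum, Finset.mul_sum, Finset.mul_sum, Finset.mul_sum,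
            ← Finset.sum_sub_distrib, ← Finset.sum_sub_distrib, ← Finset.sum_add_distrib]
          exact Finset.sum_congr rfl fun k _ => hterm j k
      _ = (∑ j, a j) * (∑ k, a k * (l k * xx k)) - (∑ j, a j * xx j) * (∑ k, a k * l k)
            - (∑ j, a j * l j) * (∑ k, a k * xx k) + (∑ j, a j * (l j * xx j)) * (∑ k, a k) := by
          rw [Finset.sum_mul, Finset.sum_mul, Finset.sum_mul, Finset.sum_mul,
            ← Finset.sum_sub_distrib, ← Finset.sum_sub_distrib, ← Finset.sum_add_distrib]
      _ = 2 * ((∑ k, a k * (l k * xx k)) - (∑ k, a k * l k) * (∑ k, a k * xx k)) := by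
          rw [ha]
          have e1 : (∑ j, a j * xx j) = ∑ k, a k * xx k := rfl
          have e2 : (∑ j, a j * l j) = ∑ k, a k * l k := rfl
          have e3 : (∑ j, a j * (l j * xx j)) = ∑ k, a k * (l k * xx k) := rfl
          rw [e1, e2, e3]; ring
  have hrhs : (∑ k, a k * (l k - ∑ j, a j * l j) * xx k)
      = (∑ k, a k * (l k * xx k)) - (∑ k, a k * l k) * (∑ k, a k * xx k) := by
    have : ∀ k : Fin n, a k * (l k - ∑ j, a j * l j) * xx k
        = a k * (l k * xx k) - (∑ j, a j * l j) * (a k * xx k) := by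
      intro k; ring
    rw [Finset.sum_congr rfl fun k _ => this k, Finset.sum_sub_distrib, ← Finset.mul_sum]
  have := key.symm.trans hexp
  rw [hrhs]
  linarith

end Stmt15Helpers

open Filter Topology in

/-- If examiner assignment `κ` is conditionally independent of the potential
treatments, treatment effect, and untreated outcome given `W`, then with `X = x(κ)`,
`Y = Y₀ + β̃·X`, and the individual weight `λ`, one has `E[ℓ̈·Y] = E[λ·β̃]` and
`E[ℓ̈·X] = E[λ]`; hence if `E[λ] ≠ 0` the leniency IV estimand equals `E[λ·β̃]/E[λ]`. -/
theorem stmt15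
    {Ω : Type*} [MeasurableSpace Ω] (μ : Measure Ω) [IsProbabilityMeasure μ]
    (K : ℕ) (hK : 2 ≤ K)
    (S : Type*) [Fintype S] [MeasurableSpace S] [MeasurableSingletonClass S]
    (κ : Ω → Fin K) (Wc : Ω → S) (hκ : Measurable κ) (hWc : Measurable Wc)
    (hpos : ∀ (k : Fin K) (w : S), 0 < μ {ω | κ ω = k ∧ Wc ω = w})
    (x : Fin K → Ω → ℝ) (hx01 : ∀ k ω, x k ω = 0 ∨ x k ω = 1)
    (βt Y₀ : Ω → ℝ) (hβt : Integrable βt μ) (hY₀ : Integrable Y₀ μ)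
    (p : Fin K → S → ℝ)
    (hp : ∀ k w, p k w = (μ {ω | κ ω = k ∧ Wc ω = w}).toReal / (μ {ω | Wc ω = w}).toReal)
    (X Y : Ω → ℝ)
    (hX : ∀ ω, X ω = x (κ ω) ω)
    (hY : ∀ ω, Y ω = Y₀ ω + βt ω * X ω)
    (ℓ : Fin K → S → ℝ)
    (hℓ : ∀ k w, ℓ k w = ∫ ω, X ω ∂(μ[|{ω | κ ω = k ∧ Wc ω = w}]))
    (ℓdd : Ω → ℝ)
    (hℓdd : ∀ ω, ℓdd ω = ℓ (κ ω) (Wc ω) - ∑ j, p j (Wc ω) * ℓ j (Wc ω))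
    -- conditional independence of `κ` and `(x(1),…,x(K), β̃, Y₀)` given `W`:
    (hci : ∀ (k : Fin K) (w : S) (f : (Fin K → ℝ) × ℝ × ℝ → ℝ),
      Measurable f → (∃ C, ∀ v, |f v| ≤ C) →
      ∫ ω in {ω | κ ω = k ∧ Wc ω = w}, f (fun j => x j ω, βt ω, Y₀ ω) ∂μ
        = p k w * ∫ ω in {ω | Wc ω = w}, f (fun j => x j ω, βt ω, Y₀ ω) ∂μ)
    (lam : Ω → ℝ)
    (hlam : ∀ ω, lam ω = ∑ j : Fin K, ∑ k : Fin K, if j < k then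
      p j (Wc ω) * p k (Wc ω) * (ℓ k (Wc ω) - ℓ j (Wc ω)) * (x k ω - x j ω) else 0)
    -- all products appearing below are integrable:
    (hint1 : Integrable (fun ω => ℓdd ω * Y ω) μ)
    (hint2 : Integrable (fun ω => ℓdd ω * X ω) μ)
    (hint3 : Integrable (fun ω => lam ω * βt ω) μ)
    (hint4 : Integrable lam μ) :
    (∫ ω, ℓdd ω * Y ω ∂μ = ∫ ω, lam ω * βt ω ∂μ) ∧
    (∫ ω, ℓdd ω * X ω ∂μ = ∫ ω, lam ω ∂μ) ∧
    (∫ ω, lam ω ∂μ ≠ 0 →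
      (∫ ω, ℓdd ω * Y ω ∂μ) / (∫ ω, ℓdd ω * X ω ∂μ)
        = (∫ ω, lam ω * βt ω ∂μ) / (∫ ω, lam ω ∂μ)) := by
  classical
  have hAm : ∀ (k : Fin K) (w : S), MeasurableSet {ω | κ ω = k ∧ Wc ω = w} := by
    intro k w
    have h1 : MeasurableSet {ω | κ ω = k} := hκ (measurableSet_singleton k)
    have h2 : MeasurableSet {ω | Wc ω = w} := hWc (measurableSet_singleton w)
    exact h1.inter h2
  have hBm : ∀ w : S, MeasurableSet {ω | Wc ω = w} := fun w => hWc (measurableSet_singleton w)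
  have hABsub : ∀ (k : Fin K) (w : S), {ω | κ ω = k ∧ Wc ω = w} ⊆ {ω | Wc ω = w} :=
    fun k w ω h => h.2
  have hk0 : 0 < K := by omega
  have hμBpos : ∀ w, 0 < μ {ω | Wc ω = w} :=
    fun w => lt_of_lt_of_le (hpos ⟨0, hk0⟩ w) (measure_mono (hABsub ⟨0, hk0⟩ w))
  have hAtoReal : ∀ k w, 0 < (μ {ω | κ ω = k ∧ Wc ω = w}).toReal :=
    fun k w => ENNReal.toReal_pos (hpos k w).ne' (measure_ne_top μ _)
  have hBtoReal : ∀ w, 0 < (μ {ω | Wc ω = w}).toReal :=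
    fun w => ENNReal.toReal_pos (hμBpos w).ne' (measure_ne_top μ _)
  have hppos : ∀ k w, 0 < p k w := by
    intro k w; rw [hp k w]; exact div_pos (hAtoReal k w) (hBtoReal w)
  have hBunion : ∀ w, {ω | Wc ω = w} = ⋃ k : Fin K, {ω | κ ω = k ∧ Wc ω = w} := by
    intro w; ext ω
    simp only [Set.mem_setOf_eq, Set.mem_iUnion]
    exact ⟨fun h => ⟨κ ω, rfl, h⟩, fun ⟨k, _, h⟩ => h⟩
  have hdisj : ∀ w, Pairwise (Function.onFun Disjoint (fun k => {ω | κ ω = k ∧ Wc ω = w})) := by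
    intro w k j hkj
    refine Set.disjoint_left.mpr ?_
    rintro ω ⟨h1, -⟩ ⟨h2, -⟩
    exact hkj (h1.symm.trans h2)
  have hμBsum : ∀ w, (μ {ω | Wc ω = w}).toReal
      = ∑ k, (μ {ω | κ ω = k ∧ Wc ω = w}).toReal := by
    intro w
    rw [hBunion w, measure_iUnion (hdisj w) (fun k => hAm k w), tsum_fintype]
    exact ENNReal.toReal_sum fun k _ => measure_ne_top μ _
  have hpsum : ∀ w, ∑ k, p k w = 1 := by
    intro w
    rw [Finset.sum_congr rfl fun k _ => hp k w, ← Finset.sum_div, ← hμBsum w,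
      div_self (hBtoReal w).ne']
  -- bootstrap: integrability on a cell implies integrability on the whole W-fiber
  have hboot : ∀ (w : S) (k : Fin K) (f : (Fin K → ℝ) × ℝ × ℝ → ℝ),
      Measurable f → (∃ C, ∀ v, |f v| ≤ C) →
      Integrable (fun ω => f (fun j => x j ω, βt ω, Y₀ ω))
        (μ.restrict {ω | κ ω = k ∧ Wc ω = w}) →
      Integrable (fun ω => f (fun j => x j ω, βt ω, Y₀ ω)) (μ.restrict {ω | Wc ω = w}) := by
    intro w k f hf hbd hIA
    by_contra hIB
    have h0 : ∫ ω in {ω | Wc ω = w}, f (fun j => x j ω, βt ω, Y₀ ω) ∂μ = 0 :=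
      integral_undef hIB
    obtain ⟨C, hC⟩ := hbd
    have hci1 := hci k w f hf ⟨C, hC⟩
    have hci2 : ∫ ω in {ω | κ ω = k ∧ Wc ω = w},
          (f (fun j => x j ω, βt ω, Y₀ ω) + 1) ∂μ
        = p k w * ∫ ω in {ω | Wc ω = w}, (f (fun j => x j ω, βt ω, Y₀ ω) + 1) ∂μ :=
      hci k w (fun v => f v + 1) (hf.add measurable_const)
        ⟨C + 1, fun v => (abs_add_le _ _).trans (by rw [abs_one]; exact add_le_add (hC v) le_rfl)⟩
    have hIB2 : ¬ Integrable (fun ω => f (fun j => x j ω, βt ω, Y₀ ω) + 1)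
        (μ.restrict {ω | Wc ω = w}) := by
      intro h
      refine hIB (Integrable.congr (h.sub (integrable_const (1 : ℝ))) (ae_of_all _ fun ω => ?_))
      simp
    have h02 : ∫ ω in {ω | Wc ω = w}, (f (fun j => x j ω, βt ω, Y₀ ω) + 1) ∂μ = 0 :=
      integral_undef hIB2
    rw [h02, mul_zero, integral_add hIA (integrable_const 1), hci1, h0, mul_zero, integral_const,
      measureReal_restrict_apply_univ, zero_add, smul_eq_mul, mul_one] at hci2
    exact absurd hci2 (hAtoReal k w).ne'
  -- the core transfer lemma
  have hCORE : ∀ (w : S) (k : Fin K) (ξ : Ω → ℝ) (Ξ : (Fin K → ℝ) × ℝ × ℝ → ℝ),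
      Measurable Ξ → (∀ v, |Ξ v| ≤ 1) →
      (∀ ω, ξ ω = Ξ (fun j => x j ω, βt ω, Y₀ ω)) →
      AEStronglyMeasurable ξ (μ.restrict {ω | κ ω = k ∧ Wc ω = w}) →
      ∀ (θ : Ω → ℝ) (Θ : (Fin K → ℝ) × ℝ × ℝ → ℝ),
        Measurable Θ → (∀ ω, θ ω = Θ (fun j => x j ω, βt ω, Y₀ ω)) → Integrable θ μ →
        Integrable (fun ω => θ ω * ξ ω) (μ.restrict {ω | Wc ω = w}) ∧
        ∫ ω in {ω | κ ω = k ∧ Wc ω = w}, θ ω * ξ ω ∂μ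
          = p k w * ∫ ω in {ω | Wc ω = w}, θ ω * ξ ω ∂μ := by
    intro w k ξ Ξ hΞm hΞbd hξΞ hξA θ Θ hΘm hθΘ hθI
    have hθae : AEStronglyMeasurable θ μ := hθI.aestronglyMeasurable
    have hξbd : ∀ ω, |ξ ω| ≤ 1 := fun ω => by rw [hξΞ ω]; exact hΞbd _
    have hξIA : Integrable ξ (μ.restrict {ω | κ ω = k ∧ Wc ω = w}) := by
      refine Integrable.mono' (integrable_const 1) hξA (ae_of_all _ fun ω => ?_)
      simpa [Real.norm_eq_abs] using hξbd ω
    have hξIB : Integrable ξ (μ.restrict {ω | Wc ω = w}) := by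
      have h1 : Integrable (fun ω => Ξ (fun j => x j ω, βt ω, Y₀ ω))
          (μ.restrict {ω | κ ω = k ∧ Wc ω = w}) :=
        hξIA.congr (ae_of_all _ fun ω => hξΞ ω)
      have h2 := hboot w k Ξ hΞm ⟨1, hΞbd⟩ h1
      exact h2.congr (ae_of_all _ fun ω => (hξΞ ω).symm)
    have hξB : AEStronglyMeasurable ξ (μ.restrict {ω | Wc ω = w}) := hξIB.aestronglyMeasurable
    have hmulI : Integrable (fun ω => θ ω * ξ ω) (μ.restrict {ω | Wc ω = w}) := by
      refine Integrable.mono' (hθI.abs.restrict) (hθae.restrict.mul hξB)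
        (ae_of_all _ fun ω => ?_)
      rw [Real.norm_eq_abs, abs_mul]
      calc |θ ω| * |ξ ω| ≤ |θ ω| * 1 :=
            mul_le_mul_of_nonneg_left (hξbd ω) (abs_nonneg _)
        _ = |θ ω| := mul_one _
    refine ⟨hmulI, ?_⟩
    have hFbd : ∀ (n : ℕ) (ω : Ω), ‖clampR n (θ ω) * ξ ω‖ ≤ |θ ω| := by
      intro n ω
      rw [Real.norm_eq_abs, abs_mul]
      calc |clampR n (θ ω)| * |ξ ω| ≤ |θ ω| * 1 :=
            mul_le_mul (clampR_abs_le_self n _) (hξbd ω) (abs_nonneg _) (abs_nonneg _)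
        _ = |θ ω| := mul_one _
    have hFtend : ∀ ω, Filter.Tendsto (fun n : ℕ => clampR n (θ ω) * ξ ω)
        Filter.atTop (𝓝 (θ ω * ξ ω)) :=
      fun ω => (clampR_tendsto (θ ω)).mul_const (ξ ω)
    have hFA : ∀ n : ℕ, AEStronglyMeasurable (fun ω => clampR n (θ ω) * ξ ω)
        (μ.restrict {ω | κ ω = k ∧ Wc ω = w}) :=
      fun n => ((clampR_continuous n).comp_aestronglyMeasurable hθae.restrict).mul hξA
    have hFB : ∀ n : ℕ, AEStronglyMeasurable (fun ω => clampR n (θ ω) * ξ ω)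
        (μ.restrict {ω | Wc ω = w}) :=
      fun n => ((clampR_continuous n).comp_aestronglyMeasurable hθae.restrict).mul hξB
    have htendA : Filter.Tendsto
        (fun n : ℕ => ∫ ω in {ω | κ ω = k ∧ Wc ω = w}, clampR n (θ ω) * ξ ω ∂μ)
        Filter.atTop (𝓝 (∫ ω in {ω | κ ω = k ∧ Wc ω = w}, θ ω * ξ ω ∂μ)) :=
      tendsto_integral_of_dominated_convergence _ hFA (hθI.abs.restrict)
        (fun n => ae_of_all _ fun ω => hFbd n ω) (ae_of_all _ fun ω => hFtend ω)
    have htendB : Filter.Tendsto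
        (fun n : ℕ => ∫ ω in {ω | Wc ω = w}, clampR n (θ ω) * ξ ω ∂μ)
        Filter.atTop (𝓝 (∫ ω in {ω | Wc ω = w}, θ ω * ξ ω ∂μ)) :=
      tendsto_integral_of_dominated_convergence _ hFB (hθI.abs.restrict)
        (fun n => ae_of_all _ fun ω => hFbd n ω) (ae_of_all _ fun ω => hFtend ω)
    have heqn : ∀ n : ℕ, ∫ ω in {ω | κ ω = k ∧ Wc ω = w}, clampR n (θ ω) * ξ ω ∂μ
        = p k w * ∫ ω in {ω | Wc ω = w}, clampR n (θ ω) * ξ ω ∂μ := by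
      intro n
      have h : ∫ ω in {ω | κ ω = k ∧ Wc ω = w},
            clampR n (Θ (fun j => x j ω, βt ω, Y₀ ω)) * Ξ (fun j => x j ω, βt ω, Y₀ ω) ∂μ
          = p k w * ∫ ω in {ω | Wc ω = w},
            clampR n (Θ (fun j => x j ω, βt ω, Y₀ ω)) * Ξ (fun j => x j ω, βt ω, Y₀ ω) ∂μ :=
        hci k w (fun v => clampR n (Θ v) * Ξ v)
          (((clampR_continuous n).measurable.comp hΘm).mul hΞm)
          ⟨(n : ℝ), fun v => by
            rw [abs_mul]
            calc |clampR n (Θ v)| * |Ξ v| ≤ (n : ℝ) * 1 :=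
                  mul_le_mul (clampR_abs_le n _) (hΞbd v) (abs_nonneg _) (Nat.cast_nonneg n)
              _ = (n : ℝ) := mul_one _⟩
      have hrw : ∀ ω, clampR n (Θ (fun j => x j ω, βt ω, Y₀ ω)) * Ξ (fun j => x j ω, βt ω, Y₀ ω)
          = clampR n (θ ω) * ξ ω := fun ω => by rw [← hθΘ ω, ← hξΞ ω]
      calc ∫ ω in {ω | κ ω = k ∧ Wc ω = w}, clampR n (θ ω) * ξ ω ∂μ
          = ∫ ω in {ω | κ ω = k ∧ Wc ω = w},
              clampR n (Θ (fun j => x j ω, βt ω, Y₀ ω)) * Ξ (fun j => x j ω, βt ω, Y₀ ω) ∂μ :=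
            integral_congr_ae (ae_of_all _ fun ω => (hrw ω).symm)
        _ = p k w * ∫ ω in {ω | Wc ω = w},
              clampR n (Θ (fun j => x j ω, βt ω, Y₀ ω)) * Ξ (fun j => x j ω, βt ω, Y₀ ω) ∂μ := h
        _ = p k w * ∫ ω in {ω | Wc ω = w}, clampR n (θ ω) * ξ ω ∂μ := by
            rw [integral_congr_ae (ae_of_all _ fun ω => hrw ω)]
    simp only [heqn] at htendA
    exact tendsto_nhds_unique htendA (htendB.const_mul (p k w))
  -- decompositions of the integral
  have hdecompW : ∀ g : Ω → ℝ, Integrable g μ →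
      ∫ ω, g ω ∂μ = ∑ w, ∫ ω in {ω | Wc ω = w}, g ω ∂μ := by
    intro g hg
    have h1 : ∀ ω, g ω = ∑ w, ({ω' | Wc ω' = w}).indicator g ω := by
      intro ω
      rw [Finset.sum_eq_single (Wc ω)]
      · exact (Set.indicator_of_mem (show ω ∈ {ω' | Wc ω' = Wc ω} from rfl) g).symm
      · exact fun b _ hb =>
          Set.indicator_of_notMem (show ω ∉ {ω' | Wc ω' = b} from fun h => hb h.symm) g
      · exact fun h => absurd (Finset.mem_univ _) h
    calc ∫ ω, g ω ∂μ = ∫ ω, (∑ w, ({ω' | Wc ω' = w}).indicator g ω) ∂μ :=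
          integral_congr_ae (ae_of_all _ h1)
      _ = ∑ w, ∫ ω, ({ω' | Wc ω' = w}).indicator g ω ∂μ :=
          integral_finset_sum _ (fun w _ => hg.indicator (hBm w))
      _ = ∑ w, ∫ ω in {ω | Wc ω = w}, g ω ∂μ :=
          Finset.sum_congr rfl fun w _ => integral_indicator (hBm w)
  have hdecompK : ∀ g : Ω → ℝ, Integrable g μ → ∀ w,
      ∫ ω in {ω | Wc ω = w}, g ω ∂μ = ∑ k, ∫ ω in {ω | κ ω = k ∧ Wc ω = w}, g ω ∂μ := by
    intro g hg w
    have h1 : ∀ ω, ({ω' | Wc ω' = w}).indicator g ω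
        = ∑ k, ({ω' | κ ω' = k ∧ Wc ω' = w}).indicator g ω := by
      intro ω
      by_cases hw : Wc ω = w
      · rw [Finset.sum_eq_single (κ ω)]
        · exact (Set.indicator_of_mem (show ω ∈ {ω' | Wc ω' = w} from hw) g).trans
            ((Set.indicator_of_mem
              (show ω ∈ {ω' | κ ω' = κ ω ∧ Wc ω' = w} from ⟨rfl, hw⟩) g).symm)
        · exact fun b _ hb =>
            Set.indicator_of_notMem
              (show ω ∉ {ω' | κ ω' = b ∧ Wc ω' = w} from fun h => hb h.1.symm) g
        · exact fun h => absurd (Finset.mem_univ _) h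
      · exact (Set.indicator_of_notMem (show ω ∉ {ω' | Wc ω' = w} from hw) g).trans
          ((Finset.sum_eq_zero fun k _ =>
            Set.indicator_of_notMem
              (show ω ∉ {ω' | κ ω' = k ∧ Wc ω' = w} from fun h => hw h.2) g).symm)
    calc ∫ ω in {ω | Wc ω = w}, g ω ∂μ
        = ∫ ω, ({ω' | Wc ω' = w}).indicator g ω ∂μ := (integral_indicator (hBm w)).symm
      _ = ∫ ω, (∑ k, ({ω' | κ ω' = k ∧ Wc ω' = w}).indicator g ω) ∂μ :=
          integral_congr_ae (ae_of_all _ h1)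
      _ = ∑ k, ∫ ω, ({ω' | κ ω' = k ∧ Wc ω' = w}).indicator g ω ∂μ :=
          integral_finset_sum _ (fun k _ => hg.indicator (hAm k w))
      _ = ∑ k, ∫ ω in {ω | κ ω = k ∧ Wc ω = w}, g ω ∂μ :=
          Finset.sum_congr rfl fun k _ => integral_indicator (hAm k w)
  -- pointwise identities
  have hℓddA : ∀ (w : S) (k : Fin K), ∀ ω ∈ {ω | κ ω = k ∧ Wc ω = w},
      ℓdd ω = ℓ k w - ∑ j, p j w * ℓ j w := by
    rintro w k ω ⟨h1, h2⟩
    rw [hℓdd ω, h1, h2]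
  have hXxA : ∀ (w : S) (k : Fin K), ∀ ω ∈ {ω | κ ω = k ∧ Wc ω = w}, X ω = x k ω := by
    rintro w k ω ⟨h1, -⟩
    rw [hX ω, h1]
  have hlamB : ∀ (w : S), ∀ ω ∈ {ω | Wc ω = w},
      lam ω = ∑ k, p k w * (ℓ k w - ∑ j, p j w * ℓ j w) * x k ω := by
    intro w ω hω
    have hw : Wc ω = w := hω
    rw [hlam ω, hw]
    exact sumIdent (fun k => p k w) (fun k => ℓ k w) (fun k => x k ω) (hpsum w)
  have hxAESM : ∀ (w : S) (k : Fin K), (ℓ k w - ∑ j, p j w * ℓ j w) ≠ 0 →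
      AEStronglyMeasurable (x k) (μ.restrict {ω | κ ω = k ∧ Wc ω = w}) := by
    intro w k hc
    have h1 : (fun ω => ℓdd ω * X ω) =ᵐ[μ.restrict {ω | κ ω = k ∧ Wc ω = w}]
        fun ω => (ℓ k w - ∑ j, p j w * ℓ j w) * x k ω := by
      refine (ae_restrict_iff' (hAm k w)).mpr (ae_of_all _ fun ω hω => ?_)
      show ℓdd ω * X ω = (ℓ k w - ∑ j, p j w * ℓ j w) * x k ω
      rw [hℓddA w k ω hω, hXxA w k ω hω]
    have h2 : AEStronglyMeasurable (fun ω => (ℓ k w - ∑ j, p j w * ℓ j w) * x k ω)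
        (μ.restrict {ω | κ ω = k ∧ Wc ω = w}) :=
      (hint2.restrict.aestronglyMeasurable).congr h1
    have h3 := h2.const_mul (ℓ k w - ∑ j, p j w * ℓ j w)⁻¹
    refine h3.congr (ae_of_all _ fun ω => ?_)
    show (ℓ k w - ∑ j, p j w * ℓ j w)⁻¹ * ((ℓ k w - ∑ j, p j w * ℓ j w) * x k ω) = x k ω
    rw [← mul_assoc, inv_mul_cancel₀ hc, one_mul]
  have hΞx : ∀ k : Fin K, Measurable (fun v : (Fin K → ℝ) × ℝ × ℝ => max 0 (min 1 (v.1 k))) :=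
    fun k => measurable_const.max (measurable_const.min ((measurable_pi_apply k).comp measurable_fst))
  have hΞxrep : ∀ (k : Fin K) (ω : Ω), x k ω = max 0 (min 1 (x k ω)) :=
    fun k ω => (clamp01_eq (hx01 k ω)).symm
  -- derived integral identities
  have hxB : ∀ (w : S) (k : Fin K), (ℓ k w - ∑ j, p j w * ℓ j w) ≠ 0 →
      Integrable (fun ω => x k ω) (μ.restrict {ω | Wc ω = w}) ∧
      ∫ ω in {ω | κ ω = k ∧ Wc ω = w}, x k ω ∂μ
        = p k w * ∫ ω in {ω | Wc ω = w}, x k ω ∂μ := by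
    intro w k hc
    have h := hCORE w k (x k) (fun v => max 0 (min 1 (v.1 k))) (hΞx k)
      (fun v => clamp01_abs_le _) (fun ω => hΞxrep k ω) (hxAESM w k hc)
      (fun _ => (1 : ℝ)) (fun _ => (1 : ℝ)) measurable_const (fun ω => rfl) (integrable_const 1)
    simpa only [one_mul] using h
  have hbxB : ∀ (w : S) (k : Fin K), (ℓ k w - ∑ j, p j w * ℓ j w) ≠ 0 →
      Integrable (fun ω => βt ω * x k ω) (μ.restrict {ω | Wc ω = w}) ∧
      ∫ ω in {ω | κ ω = k ∧ Wc ω = w}, βt ω * x k ω ∂μ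
        = p k w * ∫ ω in {ω | Wc ω = w}, βt ω * x k ω ∂μ := by
    intro w k hc
    exact hCORE w k (x k) (fun v => max 0 (min 1 (v.1 k))) (hΞx k)
      (fun v => clamp01_abs_le _) (fun ω => hΞxrep k ω) (hxAESM w k hc)
      βt (fun v => v.2.1) (measurable_fst.comp measurable_snd) (fun ω => rfl) hβt
  have hY0B : ∀ (w : S) (k : Fin K),
      ∫ ω in {ω | κ ω = k ∧ Wc ω = w}, Y₀ ω ∂μ
        = p k w * ∫ ω in {ω | Wc ω = w}, Y₀ ω ∂μ := by
    intro w k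
    have h := hCORE w k (fun _ => (1 : ℝ)) (fun _ => (1 : ℝ)) measurable_const (by norm_num)
      (fun ω => rfl) aestronglyMeasurable_const
      Y₀ (fun v => v.2.2) (measurable_snd.comp measurable_snd) (fun ω => rfl) hY₀
    simpa only [mul_one] using h.2
  -- second identity
  have key2 : ∫ ω, ℓdd ω * X ω ∂μ = ∫ ω, lam ω ∂μ := by
    rw [hdecompW _ hint2, hdecompW _ hint4]
    refine Finset.sum_congr rfl fun w _ => ?_
    have hRHS : ∫ ω in {ω | Wc ω = w}, lam ω ∂μ
        = ∑ k, p k w * (ℓ k w - ∑ j, p j w * ℓ j w)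
            * ∫ ω in {ω | Wc ω = w}, x k ω ∂μ := by
      rw [setIntegral_congr_fun (hBm w) (fun ω hω => hlamB w ω hω)]
      rw [integral_finset_sum]
      · exact Finset.sum_congr rfl fun k _ => integral_const_mul _ _
      · intro k _
        by_cases hc : (ℓ k w - ∑ j, p j w * ℓ j w) = 0
        · simp only [hc, mul_zero, zero_mul]
          exact integrable_zero _ _ _
        · exact ((hxB w k hc).1.const_mul _)
    rw [hdecompK _ hint2 w, hRHS]
    refine Finset.sum_congr rfl fun k _ => ?_
    by_cases hc : (ℓ k w - ∑ j, p j w * ℓ j w) = 0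
    · rw [setIntegral_congr_fun (hAm k w) (g := fun _ => (0 : ℝ)) (fun ω hω => by
        simp only
        rw [hℓddA w k ω hω, hc, zero_mul]), integral_zero, hc]
      ring
    · have he : Set.EqOn (fun ω => ℓdd ω * X ω)
          (fun ω => (ℓ k w - ∑ j, p j w * ℓ j w) * x k ω) {ω | κ ω = k ∧ Wc ω = w} := by
        intro ω hω
        simp only
        rw [hℓddA w k ω hω, hXxA w k ω hω]
      rw [setIntegral_congr_fun (hAm k w) he, integral_const_mul, (hxB w k hc).2]
      ring
  -- first identity
  have key1 : ∫ ω, ℓdd ω * Y ω ∂μ = ∫ ω, lam ω * βt ω ∂μ := by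
    rw [hdecompW _ hint1, hdecompW _ hint3]
    refine Finset.sum_congr rfl fun w _ => ?_
    have hRHS : ∫ ω in {ω | Wc ω = w}, lam ω * βt ω ∂μ
        = ∑ k, p k w * (ℓ k w - ∑ j, p j w * ℓ j w)
            * ∫ ω in {ω | Wc ω = w}, βt ω * x k ω ∂μ := by
      have hpt : Set.EqOn (fun ω => lam ω * βt ω)
          (fun ω => ∑ k, p k w * (ℓ k w - ∑ j, p j w * ℓ j w) * (βt ω * x k ω))
          {ω | Wc ω = w} := by
        intro ω hω
        simp only
        rw [hlamB w ω hω, Finset.sum_mul]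
        exact Finset.sum_congr rfl fun k _ => by ring
      rw [setIntegral_congr_fun (hBm w) hpt, integral_finset_sum]
      · exact Finset.sum_congr rfl fun k _ => integral_const_mul _ _
      · intro k _
        by_cases hc : (ℓ k w - ∑ j, p j w * ℓ j w) = 0
        · simp only [hc, mul_zero, zero_mul]
          exact integrable_zero _ _ _
        · exact ((hbxB w k hc).1.const_mul _)
    rw [hdecompK _ hint1 w, hRHS]
    have hterm : ∀ k, ∫ ω in {ω | κ ω = k ∧ Wc ω = w}, ℓdd ω * Y ω ∂μ
        = p k w * (ℓ k w - ∑ j, p j w * ℓ j w) * ∫ ω in {ω | Wc ω = w}, Y₀ ω ∂μ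
          + p k w * (ℓ k w - ∑ j, p j w * ℓ j w)
              * ∫ ω in {ω | Wc ω = w}, βt ω * x k ω ∂μ := by
      intro k
      by_cases hc : (ℓ k w - ∑ j, p j w * ℓ j w) = 0
      · rw [setIntegral_congr_fun (hAm k w) (g := fun _ => (0 : ℝ)) (fun ω hω => by
          simp only
          rw [hℓddA w k ω hω, hc, zero_mul]), integral_zero, hc]
        ring
      · have he : Set.EqOn (fun ω => ℓdd ω * Y ω)
            (fun ω => (ℓ k w - ∑ j, p j w * ℓ j w) * (Y₀ ω + βt ω * x k ω))
            {ω | κ ω = k ∧ Wc ω = w} := by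
          intro ω hω
          simp only
          rw [hℓddA w k ω hω, hY ω, hXxA w k ω hω]
        have hbxA : Integrable (fun ω => βt ω * x k ω)
            (μ.restrict {ω | κ ω = k ∧ Wc ω = w}) :=
          ((hbxB w k hc).1).mono_measure (Measure.restrict_mono (hABsub k w) le_rfl)
        rw [setIntegral_congr_fun (hAm k w) he, integral_const_mul,
          integral_add (hY₀.restrict) hbxA, hY0B w k, (hbxB w k hc).2]
        ring
    rw [Finset.sum_congr rfl fun k _ => hterm k, Finset.sum_add_distrib]
    have hzero : ∑ k, p k w * (ℓ k w - ∑ j, p j w * ℓ j w)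
        * ∫ ω in {ω | Wc ω = w}, Y₀ ω ∂μ = 0 := by
      rw [← Finset.sum_mul]
      have hs : ∑ k, p k w * (ℓ k w - ∑ j, p j w * ℓ j w) = 0 := by
        have h1 : ∑ k, p k w * (ℓ k w - ∑ j, p j w * ℓ j w)
            = (∑ k, p k w * ℓ k w) - (∑ k, p k w) * (∑ j, p j w * ℓ j w) := by
          simp only [mul_sub]
          rw [Finset.sum_sub_distrib, ← Finset.sum_mul]
        rw [h1, hpsum w, one_mul, sub_self]
      rw [hs, zero_mul]
    rw [hzero, zero_add]
  exact ⟨key1, key2, fun h => by rw [key1, key2]⟩
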